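/- Theorem 4.4(ii) (O(1/√k) rate of S-based asymptotic regularity for the relaxed G-FBS algorithm with relaxation operator M): Let (x_k) and (x̃_k) be sequences in H satisfying, for every k ∈ ℕ, Q x_k − B x_k − Q x̃_k ∈ A x̃_k and x_{k+1} = x_k + M(x̃_k − x_k); let x⋆ ∈ H satisfy −B x⋆ ∈ A x⋆; and suppose there exists η > 0 such that for every k ∈ ℕ, ‖x_k − x̃_k‖_G² ≥ η · ‖x_k − x_{k+1}‖_S² (since M⁻¹(x_k − x_{k+1}) = x_k − x̃_k, the left-hand side equals the paper's ‖x_k − x_{k+1}‖²_{M⁻ᵀ G M⁻¹}). Then for every k ∈ ℕ, ⟪S(x_{k+1} − x_k), x_{k+1} − x_k⟫ ≤ (1/(η(k+1))) · ⟪S(x_0 − x⋆), x_0 − x⋆⟫; equivalently, ‖x_{k+1} − x_k‖_S ≤ (1/√(k+1)) · (1/√η) · ‖x_0 − x⋆‖_S. -/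

import Mathlib

open RealInnerProductSpace

/-- Key cocoercivity/range estimate: if `u = Qt w` lies in the range of the positive
semidefinite part and `‖u‖² ≤ β ⟪u, c⟫`, then `⟪u, c⟫ + ⟪u, z⟫ ≥ -(β/(4ν)) ⟪Qt z, z⟫`. -/
lemma key_coco {H : Type*} [NormedAddCommGroup H] [InnerProductSpace ℝ H] [CompleteSpace H]
    (Qt : H →L[ℝ] H) (hsym : ∀ x y : H, ⟪Qt x, y⟫ = ⟪x, Qt y⟫)
    (hpos : ∀ x : H, 0 ≤ ⟪Qt x, x⟫)
    (ν : ℝ) (hν : 0 < ν) (hνQ : ∀ w ∈ (LinearMap.ker (Qt : H →ₗ[ℝ] H))ᗮ, ν * ‖w‖ ≤ ‖Qt w‖)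
    (β : ℝ) (hβ : 0 ≤ β)
    (u c z : H) (hu : ∃ w, Qt w = u)
    (hcoco : ‖u‖ ^ 2 ≤ β * ⟪u, c⟫) :
    -(β / (4 * ν)) * ⟪Qt z, z⟫ ≤ ⟪u, c⟫ + ⟪u, z⟫ := by
  rcases hβ.eq_or_lt with hb0 | hb0
  · have hu0 : u = 0 := by
      have h1 : ‖u‖ ^ 2 ≤ 0 := by rw [← hb0] at hcoco; simpa using hcoco
      have : ‖u‖ = 0 := by nlinarith [norm_nonneg u]
      exact norm_eq_zero.mp this
    subst hu0
    simp [← hb0]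
  · obtain ⟨w', hw'⟩ := hu
    obtain ⟨a, ha, b, hb, hab⟩ := (LinearMap.ker (Qt : H →ₗ[ℝ] H)).exists_add_mem_mem_orthogonal w'
    have hQta : Qt a = 0 := ha
    have hQtb : Qt b = u := by
      rw [← hw', hab, map_add, hQta, zero_add]
    -- ν ⟪Qt b, b⟫ ≤ ‖u‖²
    have h1 : ν * ⟪Qt b, b⟫ ≤ ‖u‖ ^ 2 := by
      have hcs : ⟪Qt b, b⟫ ≤ ‖Qt b‖ * ‖b‖ := real_inner_le_norm _ _
      have hlb : ν * ‖b‖ ≤ ‖Qt b‖ := hνQ b hb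
      have hbn : (0:ℝ) ≤ ‖b‖ := norm_nonneg _
      have hQbn : (0:ℝ) ≤ ‖Qt b‖ := norm_nonneg _
      have : ν * ⟪Qt b, b⟫ ≤ ‖Qt b‖ ^ 2 := by nlinarith
      rw [← hQtb]; nlinarith
    -- positivity at (2ν) b + β z
    have h2 : 0 ≤ ⟪Qt ((2*ν) • b + β • z), (2*ν) • b + β • z⟫ := hpos _
    have h2' : 0 ≤ (2*ν)*(2*ν)*⟪Qt b, b⟫ + 2*((2*ν)*β)*⟪Qt b, z⟫ + β*β*⟪Qt z, z⟫ := by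
      have hzb : ⟪Qt z, b⟫ = ⟪Qt b, z⟫ := by
        rw [hsym z b, real_inner_comm]
      rw [map_add, map_smul, map_smul] at h2
      simp only [inner_add_left, inner_add_right, inner_smul_left, inner_smul_right,
        RCLike.ofReal_real_eq_id, id, starRingEnd_apply, star_trivial] at h2
      rw [hzb] at h2
      nlinarith [h2]
    -- cocoercivity
    have h3 : ‖u‖ ^ 2 ≤ β * ⟪u, c⟫ := hcoco
    have hQz : 0 ≤ ⟪Qt z, z⟫ := hpos z
    -- scale goal by 4νβ > 0
    have h4 : -(β^2 * ⟪Qt z, z⟫) ≤ (4*ν*β) * (⟪u, c⟫ + ⟪u, z⟫) := by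
      have e1 : (0:ℝ) ≤ 4*ν := by linarith
      have k1 := mul_le_mul_of_nonneg_left h1 e1
      have k2 := mul_le_mul_of_nonneg_left h3 e1
      have huz : ⟪u, z⟫ = ⟪Qt b, z⟫ := by rw [← hQtb]
      rw [huz]
      nlinarith [h2', k1, k2]
    have hc : (0:ℝ) < 4*ν*β := by positivity
    have hν4 : (4:ℝ)*ν ≠ 0 := by positivity
    have hβ0 : β ≠ 0 := ne_of_gt hb0
    calc -(β / (4 * ν)) * ⟪Qt z, z⟫
        = (-(β^2 * ⟪Qt z, z⟫)) / (4*ν*β) := by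
          field_simp
      _ ≤ ((4*ν*β) * (⟪u, c⟫ + ⟪u, z⟫)) / (4*ν*β) :=
          div_le_div_of_nonneg_right h4 hc.le
      _ = ⟪u, c⟫ + ⟪u, z⟫ := by
          rw [mul_div_cancel_left₀ _ (ne_of_gt hc)]

/-- Cross monotonicity estimate between two "iterates" of the inclusion scheme. -/
lemma key_cross {H : Type*} [NormedAddCommGroup H] [InnerProductSpace ℝ H] [CompleteSpace H]
    (Q : H →L[ℝ] H)
    (Qt : H →L[ℝ] H) (hQt : Qt = (1 / 2 : ℝ) • (Q + ContinuousLinearMap.adjoint Q))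
    (hpos : ∀ x : H, 0 ≤ ⟪Qt x, x⟫)
    (ν : ℝ) (hν : 0 < ν) (hνQ : ∀ w ∈ (LinearMap.ker (Qt : H →ₗ[ℝ] H))ᗮ, ν * ‖w‖ ≤ ‖Qt w‖)
    (β : ℝ) (hβ : 0 ≤ β)
    (B : H → H)
    (hB : ∀ x y : H, ‖B x - B y‖ ^ 2 ≤ β * ⟪B x - B y, x - y⟫)
    (hranB : Set.range B ⊆ Set.range Qt)
    (A : H → Set H)
    (hA : ∀ x y u v : H, u ∈ A x → v ∈ A y → 0 ≤ ⟪u - v, x - y⟫)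
    (a ta b tb : H)
    (hu : Q a - B a - Q ta ∈ A ta) (hv : Q b - B b - Q tb ∈ A tb) :
    (1 - β / (4 * ν)) * ⟪Q ((a - ta) - (b - tb)), (a - ta) - (b - tb)⟫ ≤
      ⟪Q ((a - ta) - (b - tb)), a - b⟫ := by
  have hsym : ∀ x y : H, ⟪Qt x, y⟫ = ⟪x, Qt y⟫ := by
    intro x y
    rw [hQt]
    simp only [ContinuousLinearMap.smul_apply, ContinuousLinearMap.add_apply,
      inner_smul_left, inner_smul_right, inner_add_left, inner_add_right,
      ContinuousLinearMap.adjoint_inner_left, ContinuousLinearMap.adjoint_inner_right,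
      starRingEnd_apply, star_trivial]
    ring
  set e : H := (a - ta) - (b - tb) with he
  have hQte : ⟪Qt e, e⟫ = ⟪Q e, e⟫ := by
    rw [hQt]
    simp only [ContinuousLinearMap.smul_apply, ContinuousLinearMap.add_apply,
      inner_smul_left, inner_add_left, ContinuousLinearMap.adjoint_inner_left,
      starRingEnd_apply, star_trivial]
    rw [real_inner_comm e (Q e)]
    ring
  -- the cocoercive part
  have hrange : ∃ w, Qt w = B a - B b := by
    obtain ⟨w1, hw1⟩ := hranB ⟨a, rfl⟩
    obtain ⟨w2, hw2⟩ := hranB ⟨b, rfl⟩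
    exact ⟨w1 - w2, by rw [map_sub, hw1, hw2]⟩
  have hkey := key_coco Qt hsym hpos ν hν hνQ β hβ (B a - B b) (a - b) (-e) hrange (hB a b)
  have hQtee : ⟪Qt (-e), -e⟫ = ⟪Qt e, e⟫ := by rw [map_neg, inner_neg_neg]
  rw [hQtee] at hkey
  -- monotonicity of A
  have hmono := hA ta tb _ _ hu hv
  have hexp : (Q a - B a - Q ta) - (Q b - B b - Q tb) = Q e - (B a - B b) := by
    rw [he, map_sub, map_sub, map_sub]
    abel
  rw [hexp] at hmono
  have htatb : ta - tb = (a - b) + (-e) := by rw [he]; abel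
  rw [htatb] at hmono
  rw [inner_sub_left] at hmono
  -- combine
  have h1 : ⟪B a - B b, (a - b) + (-e)⟫ = ⟪B a - B b, a - b⟫ + ⟪B a - B b, -e⟫ :=
    inner_add_right _ _ _
  have h2 : ⟪Q e, (a - b) + (-e)⟫ = ⟪Q e, a - b⟫ - ⟪Q e, e⟫ := by
    rw [inner_add_right, inner_neg_right]; ring
  rw [h1, h2] at hmono
  rw [hQte] at hkey
  linarith

/-- Theorem 4.4(ii): `O(1/√k)` rate of `S`-based asymptotic regularity for the
relaxed G-FBS algorithm with relaxation operator `M`. -/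
theorem stmt_19
    {H : Type*} [NormedAddCommGroup H] [InnerProductSpace ℝ H] [CompleteSpace H]
    (Q : H →L[ℝ] H)
    (Qt : H →L[ℝ] H) (hQt : Qt = (1 / 2 : ℝ) • (Q + ContinuousLinearMap.adjoint Q))
    (hQtpos : ∀ x : H, 0 ≤ ⟪Qt x, x⟫)
    (ν : ℝ) (hν : 0 < ν)
    (hνQ : ∀ w ∈ (LinearMap.ker (Qt : H →ₗ[ℝ] H))ᗮ, ν * ‖w‖ ≤ ‖Qt w‖)
    (M : H ≃L[ℝ] H)
    (β : ℝ) (hβ : 0 ≤ β)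
    (B : H → H)
    (hB : ∀ x y : H, ‖B x - B y‖ ^ 2 ≤ β * ⟪B x - B y, x - y⟫)
    (hranB : Set.range B ⊆ Set.range Qt)
    (S : H →L[ℝ] H) (hS : S = Q ∘L (M.symm : H →L[ℝ] H))
    (hSsym : ∀ x y : H, ⟪S x, y⟫ = ⟪x, S y⟫)
    (hSpos : ∀ x : H, 0 ≤ ⟪S x, x⟫)
    (G : H →L[ℝ] H)
    (hG : G = (1 - β / (4 * ν)) • (Q + ContinuousLinearMap.adjoint Q) -
      (ContinuousLinearMap.adjoint (M : H →L[ℝ] H)) ∘L Q)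
    (hGsym : ∀ x y : H, ⟪G x, y⟫ = ⟪x, G y⟫)
    (hGpos : ∀ x : H, 0 ≤ ⟪G x, x⟫)
    (A : H → Set H)
    (hA : ∀ x y u v : H, u ∈ A x → v ∈ A y → 0 ≤ ⟪u - v, x - y⟫)
    (x xt : ℕ → H)
    (hxt : ∀ k : ℕ, Q (x k) - B (x k) - Q (xt k) ∈ A (xt k))
    (hstep : ∀ k : ℕ, x (k + 1) = x k + M (xt k - x k))
    (xs : H) (hxs : -B xs ∈ A xs)
    (η : ℝ) (hη : 0 < η)
    (hηG : ∀ k : ℕ, η * ⟪S (x k - x (k + 1)), x k - x (k + 1)⟫ ≤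
      ⟪G (x k - xt k), x k - xt k⟫) :
    ∀ k : ℕ, ⟪S (x (k + 1) - x k), x (k + 1) - x k⟫ ≤
      (1 / (η * ((k : ℝ) + 1))) * ⟪S (x 0 - xs), x 0 - xs⟫ := by
  -- basic reformulations
  have hxs' : Q xs - B xs - Q xs ∈ A xs := by
    have : Q xs - B xs - Q xs = -B xs := by abel
    rw [this]; exact hxs
  have hcross := fun a ta b tb hu hv =>
    key_cross Q Qt hQt hQtpos ν hν hνQ β hβ B hB hranB A hA a ta b tb hu hv
  have hd : ∀ k, x (k + 1) = x k - M (x k - xt k) := by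
    intro k
    rw [hstep k]
    have : xt k - x k = -(x k - xt k) := by abel
    rw [this, map_neg]
    abel
  have hSM : ∀ v : H, S (M v) = Q v := by
    intro v
    rw [hS]
    simp [ContinuousLinearMap.comp_apply]
  have hGe : ∀ e : H, ⟪G e, e⟫ = 2 * (1 - β / (4 * ν)) * ⟪Q e, e⟫ - ⟪Q e, M e⟫ := by
    intro e
    rw [hG]
    simp only [ContinuousLinearMap.sub_apply, ContinuousLinearMap.smul_apply,
      ContinuousLinearMap.add_apply, ContinuousLinearMap.comp_apply,
      ContinuousLinearMap.coe_coe, ContinuousLinearEquiv.coe_coe,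
      inner_sub_left, inner_smul_left, inner_add_left,
      ContinuousLinearMap.adjoint_inner_left,
      starRingEnd_apply, star_trivial]
    rw [real_inner_comm e (Q e)]
    ring
  -- the symmetric cross identity for S-inner products
  have hQM : ∀ d e : H, ⟪Q d, M e⟫ = ⟪Q e, M d⟫ := by
    intro d e
    calc ⟪Q d, M e⟫ = ⟪S (M d), M e⟫ := by rw [hSM]
      _ = ⟪M d, S (M e)⟫ := hSsym _ _
      _ = ⟪M d, Q e⟫ := by rw [hSM]
      _ = ⟪Q e, M d⟫ := real_inner_comm _ _
  -- expansion identities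
  have hexp1 : ∀ v d : H, ⟪S (v - M d), v - M d⟫ =
      ⟪S v, v⟫ - 2 * ⟪Q d, v⟫ + ⟪Q d, M d⟫ := by
    intro v d
    have h1 : S (v - M d) = S v - Q d := by rw [map_sub, hSM]
    have h2 : ⟪S v, M d⟫ = ⟪Q d, v⟫ := by
      rw [hSsym v (M d), hSM]; exact real_inner_comm _ _
    rw [h1, inner_sub_left, inner_sub_right, inner_sub_right, h2]
    ring
  have hexp2 : ∀ d e : H, ⟪Q (d - e), M (d - e)⟫ =
      ⟪Q d, M d⟫ - 2 * ⟪Q e, M d⟫ + ⟪Q e, M e⟫ := by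
    intro d e
    rw [map_sub, map_sub, inner_sub_left, inner_sub_right, inner_sub_right, hQM d e]
    ring
  -- descent inequality (i)
  have hφ : ∀ k, ⟪S (x (k+1) - xs), x (k+1) - xs⟫ + ⟪G (x k - xt k), x k - xt k⟫ ≤
      ⟪S (x k - xs), x k - xs⟫ := by
    intro k
    have h1 : x (k+1) - xs = (x k - xs) - M (x k - xt k) := by rw [hd k]; abel
    have hcr : (1 - β / (4 * ν)) * ⟪Q (x k - xt k), x k - xt k⟫ ≤
        ⟪Q (x k - xt k), x k - xs⟫ := by
      have h2 := hcross (x k) (xt k) xs xs (hxt k) hxs'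
      simpa using h2
    rw [h1, hexp1, hGe]
    linarith
  -- monotonicity inequality (ii)
  have hψstep : ∀ k, ⟪S (x (k+2) - x (k+1)), x (k+2) - x (k+1)⟫ ≤
      ⟪S (x (k+1) - x k), x (k+1) - x k⟫ := by
    intro k
    have hψk : ∀ j, ⟪S (x (j+1) - x j), x (j+1) - x j⟫ =
        ⟪Q (x j - xt j), M (x j - xt j)⟫ := by
      intro j
      have h1 : x (j+1) - x j = -(M (x j - xt j)) := by rw [hd j]; abel
      rw [h1, map_neg, inner_neg_neg, hSM]
    have hcr : (1 - β / (4 * ν)) *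
        ⟪Q ((x k - xt k) - (x (k+1) - xt (k+1))), (x k - xt k) - (x (k+1) - xt (k+1))⟫ ≤
        ⟪Q ((x k - xt k) - (x (k+1) - xt (k+1))), M (x k - xt k)⟫ := by
      have h2 := hcross (x k) (xt k) (x (k+1)) (xt (k+1)) (hxt k) (hxt (k+1))
      have h3 : x k - x (k+1) = M (x k - xt k) := by rw [hd k]; abel
      rw [h3] at h2
      exact h2
    have hGp : ⟪Q ((x k - xt k) - (x (k+1) - xt (k+1))),
        M ((x k - xt k) - (x (k+1) - xt (k+1)))⟫ ≤ 2 * (1 - β / (4 * ν)) *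
        ⟪Q ((x k - xt k) - (x (k+1) - xt (k+1))), (x k - xt k) - (x (k+1) - xt (k+1))⟫ := by
      have h4 := hGpos ((x k - xt k) - (x (k+1) - xt (k+1)))
      rw [hGe] at h4
      linarith
    have hde : x (k+1) - xt (k+1) = (x k - xt k) - ((x k - xt k) - (x (k+1) - xt (k+1))) := by
      abel
    rw [hψk k, hψk (k+1), hde, hexp2]
    linarith
  have hanti : ∀ j k : ℕ, j ≤ k →
      ⟪S (x (k+1) - x k), x (k+1) - x k⟫ ≤ ⟪S (x (j+1) - x j), x (j+1) - x j⟫ := by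
    intro j k hjk
    induction k with
    | zero => simp_all
    | succ n ih =>
      rcases Nat.lt_or_ge j (n+1) with h | h
      · exact le_trans (hψstep n) (ih (Nat.lt_succ_iff.mp h))
      · have : j = n + 1 := le_antisymm hjk h
        rw [this]
  have hηψ : ∀ k, η * ⟪S (x (k+1) - x k), x (k+1) - x k⟫ ≤
      ⟪G (x k - xt k), x k - xt k⟫ := by
    intro k
    have h1 : x k - x (k+1) = -(x (k+1) - x k) := by abel
    have := hηG k
    rw [h1, map_neg, inner_neg_neg] at this
    exact this
  -- summation
  have hsum : ∀ k : ℕ, ⟪S (x k - xs), x k - xs⟫ +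
      ∑ j ∈ Finset.range k, ⟪G (x j - xt j), x j - xt j⟫ ≤
      ⟪S (x 0 - xs), x 0 - xs⟫ := by
    intro k
    induction k with
    | zero => simp
    | succ n ih =>
      rw [Finset.sum_range_succ]
      have := hφ n
      linarith
  have hbound : ∀ k : ℕ, η * ((k:ℝ) + 1) * ⟪S (x (k+1) - x k), x (k+1) - x k⟫ ≤
      ⟪S (x 0 - xs), x 0 - xs⟫ := by
    intro k
    have c1 : η * ((k:ℝ) + 1) * ⟪S (x (k+1) - x k), x (k+1) - x k⟫ =
        ∑ j ∈ Finset.range (k+1), η * ⟪S (x (k+1) - x k), x (k+1) - x k⟫ := by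
      rw [Finset.sum_const, Finset.card_range, nsmul_eq_mul]
      push_cast
      ring
    have c2 : ∑ j ∈ Finset.range (k+1), η * ⟪S (x (k+1) - x k), x (k+1) - x k⟫ ≤
        ∑ j ∈ Finset.range (k+1), η * ⟪S (x (j+1) - x j), x (j+1) - x j⟫ := by
      apply Finset.sum_le_sum
      intro j hj
      exact mul_le_mul_of_nonneg_left (hanti j k (Nat.lt_succ_iff.mp (Finset.mem_range.mp hj)))
        hη.le
    have c3 : ∑ j ∈ Finset.range (k+1), η * ⟪S (x (j+1) - x j), x (j+1) - x j⟫ ≤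
        ∑ j ∈ Finset.range (k+1), ⟪G (x j - xt j), x j - xt j⟫ :=
      Finset.sum_le_sum fun j _ => hηψ j
    have c4 := hsum (k+1)
    have c5 := hSpos (x (k+1) - xs)
    linarith
  intro k
  have hb := hbound k
  have hk : (0:ℝ) < η * ((k:ℝ) + 1) := by positivity
  rw [show (1 / (η * ((k:ℝ) + 1))) * ⟪S (x 0 - xs), x 0 - xs⟫ =
      ⟪S (x 0 - xs), x 0 - xs⟫ / (η * ((k:ℝ) + 1)) from by ring,
    le_div_iff₀ hk]
  nlinarith [hb]
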